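/- Let G=(V,E) be a weighted undirected connected simple locally finite graph with edge weights w_{xy}>0. Then for every function f: V → ℝ and every vertex x, Γ₂(f,f)(x) ≥ (1/2)(Δf(x))² + ((1/2)t_w(x) − 1)·Γ(f,f)(x), where t_w(x) = min_{y∼x}{ 4w_{xy}/d_y + ∑_{x₁∼x, x₁∼y} min(w_{xy}/d_y, w_{xx₁}/d_{x₁})·(w_{x₁y}/w_{xy}) }, the inner sum running over all common neighbors x₁ of x and y. -/

import Mathlib

open SimpleGraph Finset

variable {V : Type*}

/-- A system of edge weights on `G`: symmetric, positive on edges and zero elsewhere. -/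
def IsWeight (G : SimpleGraph V) (w : V → V → ℝ) : Prop :=
  (∀ u v, w u v = w v u) ∧ (∀ u v, G.Adj u v → 0 < w u v) ∧ (∀ u v, ¬G.Adj u v → w u v = 0)

/-- The weighted degree `d_x = ∑_{y∼x} w_{xy}`. -/
noncomputable def wdeg (G : SimpleGraph V) [G.LocallyFinite] (w : V → V → ℝ) (x : V) : ℝ :=
  ∑ y ∈ G.neighborFinset x, w x y

/-- The probability measure attached to a vertex `x`: `m_x(z) = w_{xz}/d_x` for `z ∼ x`. -/
noncomputable def wMeasure (G : SimpleGraph V) [G.LocallyFinite] [DecidableRel G.Adj]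
    (w : V → V → ℝ) (x z : V) : ℝ :=
  if G.Adj x z then w x z / wdeg G w x else 0

/-- A coupling (transfer plan) between the measures `m_x` and `m_y`. -/
def IsWCoupling (G : SimpleGraph V) [G.LocallyFinite] [DecidableRel G.Adj]
    (w : V → V → ℝ) (x y : V) (ξ : V → V → ℝ) : Prop :=
  (∀ u v, 0 ≤ ξ u v) ∧
  (∀ u v, ξ u v ≠ 0 → G.Adj x u ∧ G.Adj y v) ∧
  (∀ u, ∑ v ∈ G.neighborFinset y, ξ u v = wMeasure G w x u) ∧
  (∀ v, ∑ u ∈ G.neighborFinset x, ξ u v = wMeasure G w y v)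

/-- The transportation distance `W₁(m_x, m_y)`. -/
noncomputable def wW1 (G : SimpleGraph V) [G.LocallyFinite] [DecidableRel G.Adj]
    (w : V → V → ℝ) (x y : V) : ℝ :=
  sInf { c : ℝ | ∃ ξ : V → V → ℝ, IsWCoupling G w x y ξ ∧
    c = ∑ u ∈ G.neighborFinset x, ∑ v ∈ G.neighborFinset y, (G.dist u v : ℝ) * ξ u v }

/-- Ollivier's Ricci curvature `κ(x,y) = 1 - W₁(m_x,m_y)/d(x,y)` on a weighted graph. -/
noncomputable def wRicci (G : SimpleGraph V) [G.LocallyFinite] [DecidableRel G.Adj]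
    (w : V → V → ℝ) (x y : V) : ℝ :=
  1 - wW1 G w x y / (G.dist x y : ℝ)

/-- Positive part of a real number: `a₊ = max a 0`. -/
noncomputable def posPart' (a : ℝ) : ℝ := max a 0

/-- The weighted graph Laplacian `Δf(x) = (1/d_x)∑_{y∼x} w_{xy} f(y) - f(x)`. -/
noncomputable def wlap (G : SimpleGraph V) [G.LocallyFinite] (w : V → V → ℝ)
    (f : V → ℝ) (x : V) : ℝ :=
  (wdeg G w x)⁻¹ * ∑ y ∈ G.neighborFinset x, w x y * f y - f x

/-- The Bakry–Émery operator `Γ(f,g)(x) = (1/2)(Δ(fg) - fΔg - gΔf)(x)`. -/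
noncomputable def wgam (G : SimpleGraph V) [G.LocallyFinite] (w : V → V → ℝ)
    (f g : V → ℝ) (x : V) : ℝ :=
  (1 / 2) * (wlap G w (f * g) x - f x * wlap G w g x - g x * wlap G w f x)

/-- The Bakry–Émery operator `Γ₂(f,f)(x) = (1/2)(ΔΓ(f,f) - 2Γ(f,Δf))(x)`. -/
noncomputable def wgam2 (G : SimpleGraph V) [G.LocallyFinite] (w : V → V → ℝ)
    (f : V → ℝ) (x : V) : ℝ :=
  (1 / 2) * (wlap G w (wgam G w f f) x - 2 * wgam G w f (wlap G w f) x)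

/-- `t_w(x) = min_{y∼x} { 4w_{xy}/d_y + ∑_{x₁∼x, x₁∼y} ((w_{xy}/d_y) ∧ (w_{xx₁}/d_{x₁}))·(w_{x₁y}/w_{xy}) }`. -/
noncomputable def tw (G : SimpleGraph V) [G.LocallyFinite] [DecidableEq V]
    (w : V → V → ℝ) (x : V) : ℝ :=
  ⨅ y : G.neighborSet x,
    (4 * w x (y : V) / wdeg G w (y : V) +
      ∑ z ∈ G.neighborFinset x ∩ G.neighborFinset (y : V),
        min (w x (y : V) / wdeg G w (y : V)) (w x z / wdeg G w z) * (w z (y : V) / w x (y : V)))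

lemma wdeg_pos (G : SimpleGraph V) [G.LocallyFinite] {w : V → V → ℝ} (hw : IsWeight G w)
    {u v : V} (h : G.Adj u v) : 0 < wdeg G w u := by
  apply Finset.sum_pos
  · intro y hy; exact hw.2.1 _ _ ((G.mem_neighborFinset u y).mp hy)
  · exact ⟨v, (G.mem_neighborFinset u v).mpr h⟩

lemma wlap_eq (G : SimpleGraph V) [G.LocallyFinite] {w : V → V → ℝ}
    (f : V → ℝ) {x : V} (hx : 0 < wdeg G w x) :
    wlap G w f x = (wdeg G w x)⁻¹ * ∑ y ∈ G.neighborFinset x, w x y * (f y - f x) := by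
  have h1 : ∑ y ∈ G.neighborFinset x, w x y * (f y - f x)
      = (∑ y ∈ G.neighborFinset x, w x y * f y) - wdeg G w x * f x := by
    rw [wdeg, Finset.sum_mul, ← Finset.sum_sub_distrib]
    exact Finset.sum_congr rfl fun y _ => by ring
  rw [wlap, h1, mul_sub, ← mul_assoc, inv_mul_cancel₀ hx.ne', one_mul]

lemma wgam_eq (G : SimpleGraph V) [G.LocallyFinite] {w : V → V → ℝ}
    (f g : V → ℝ) {x : V} (hx : 0 < wdeg G w x) :
    wgam G w f g x = (1 / 2) * (wdeg G w x)⁻¹ *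
      ∑ y ∈ G.neighborFinset x, w x y * ((f y - f x) * (g y - g x)) := by
  have h1 : ∑ y ∈ G.neighborFinset x, w x y * ((f y - f x) * (g y - g x))
      = (∑ y ∈ G.neighborFinset x, w x y * (f y * g y))
        - f x * (∑ y ∈ G.neighborFinset x, w x y * g y)
        - g x * (∑ y ∈ G.neighborFinset x, w x y * f y)
        + wdeg G w x * (f x * g x) := by
    rw [wdeg, Finset.sum_mul, Finset.mul_sum, Finset.mul_sum,
      ← Finset.sum_sub_distrib, ← Finset.sum_sub_distrib, ← Finset.sum_add_distrib]
    exact Finset.sum_congr rfl fun y _ => by ring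
  have hx' : wdeg G w x ≠ 0 := hx.ne'
  rw [wgam, wlap, wlap, wlap, h1]
  have h2 : ∑ y ∈ G.neighborFinset x, w x y * (f * g) y
      = ∑ y ∈ G.neighborFinset x, w x y * (f y * g y) := rfl
  rw [h2]
  field_simp
  simp only [Pi.mul_apply]
  ring

lemma wgam_sq (G : SimpleGraph V) [G.LocallyFinite] {w : V → V → ℝ}
    (f : V → ℝ) {x : V} (hx : 0 < wdeg G w x) :
    wgam G w f f x = (1 / 2) * (wdeg G w x)⁻¹ *
      ∑ y ∈ G.neighborFinset x, w x y * (f y - f x) ^ 2 := by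
  rw [wgam_eq G f f hx]
  congr 1
  exact Finset.sum_congr rfl fun y _ => by ring

/-- per-neighbor identity: Γf(y) - (f y - f x)Δf(y) = ½ Q y - ½ (f y - f x)². -/
lemma key_y (G : SimpleGraph V) [G.LocallyFinite] {w : V → V → ℝ} (hw : IsWeight G w)
    (f : V → ℝ) {x y : V} (hy : G.Adj x y) :
    wgam G w f f y - (f y - f x) * wlap G w f y
      = (1 / 2) * ((wdeg G w y)⁻¹ *
          ∑ z ∈ G.neighborFinset y, w y z * (f x - 2 * f y + f z) ^ 2)
        - (1 / 2) * (f y - f x) ^ 2 := by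
  have hDy : 0 < wdeg G w y := wdeg_pos G hw hy.symm
  rw [wgam_sq G f hDy, wlap_eq G f hDy]
  have hsum : ∑ z ∈ G.neighborFinset y, w y z * (f x - 2 * f y + f z) ^ 2
      = (∑ z ∈ G.neighborFinset y, w y z * (f z - f y) ^ 2)
        - 2 * (f y - f x) * (∑ z ∈ G.neighborFinset y, w y z * (f z - f y))
        + (f y - f x) ^ 2 * wdeg G w y := by
    rw [wdeg, Finset.mul_sum, Finset.mul_sum, ← Finset.sum_sub_distrib, ← Finset.sum_add_distrib]
    exact Finset.sum_congr rfl fun z _ => by ring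
  rw [hsum]
  have hDy' : (wdeg G w y) ≠ 0 := hDy.ne'
  field_simp
  ring

/-- Key identity for Γ₂. -/
lemma gam2_identity (G : SimpleGraph V) [G.LocallyFinite] {w : V → V → ℝ} (hw : IsWeight G w)
    (f : V → ℝ) {x : V} (hx : 0 < wdeg G w x) :
    wgam2 G w f x = (1 / 2) * (wlap G w f x) ^ 2 - wgam G w f f x
      + (1 / 4) * (wdeg G w x)⁻¹ *
        ∑ y ∈ G.neighborFinset x, w x y * ((wdeg G w y)⁻¹ *
          ∑ z ∈ G.neighborFinset y, w y z * (f x - 2 * f y + f z) ^ 2) := by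
  set D := wdeg G w x with hD
  set N := G.neighborFinset x with hN
  set Γ := wgam G w f f with hΓ
  set Δ := wlap G w f with hΔ
  -- expand wgam2 using wlap_eq and wgam_eq at x
  have e1 : wlap G w Γ x = D⁻¹ * ∑ y ∈ N, w x y * (Γ y - Γ x) := wlap_eq G Γ hx
  have e2 : wgam G w f Δ x = (1 / 2) * D⁻¹ * ∑ y ∈ N, w x y * ((f y - f x) * (Δ y - Δ x)) :=
    wgam_eq G f Δ hx
  -- per-term rewriting of the combined sum
  have e3 : ∑ y ∈ N, (w x y * (Γ y - Γ x) - w x y * ((f y - f x) * (Δ y - Δ x)))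
      = (1/2) * (∑ y ∈ N, w x y * ((wdeg G w y)⁻¹ *
            ∑ z ∈ G.neighborFinset y, w y z * (f x - 2 * f y + f z) ^ 2))
        - (1/2) * (∑ y ∈ N, w x y * (f y - f x) ^ 2)
        - Γ x * (∑ y ∈ N, w x y)
        + Δ x * (∑ y ∈ N, w x y * (f y - f x)) := by
    have step : ∑ y ∈ N, (w x y * (Γ y - Γ x) - w x y * ((f y - f x) * (Δ y - Δ x)))
        = ∑ y ∈ N, ((1/2) * (w x y * ((wdeg G w y)⁻¹ *
              ∑ z ∈ G.neighborFinset y, w y z * (f x - 2 * f y + f z) ^ 2))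
            - (1/2) * (w x y * (f y - f x) ^ 2)
            - Γ x * (w x y)
            + Δ x * (w x y * (f y - f x))) := by
      refine Finset.sum_congr rfl fun y hy => ?_
      have hadj : G.Adj x y := (G.mem_neighborFinset x y).mp hy
      have hk := key_y G hw f hadj
      have h5 : w x y * (Γ y - Γ x) - w x y * ((f y - f x) * (Δ y - Δ x))
          = w x y * ((Γ y - (f y - f x) * Δ y) - Γ x + (f y - f x) * Δ x) := by ring
      rw [h5, hΓ, hΔ, hk]
      ring
    rw [step]
    simp only [Finset.sum_add_distrib, Finset.sum_sub_distrib, ← Finset.mul_sum]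
  have hB : ∑ y ∈ N, w x y * (f y - f x) ^ 2 = 2 * D * Γ x := by
    rw [hΓ, wgam_sq G f hx]
    field_simp
    rw [← hD, ← hN, mul_div_cancel_left₀ _ hx.ne']
  have hC : ∑ y ∈ N, w x y = D := rfl
  have hE : ∑ y ∈ N, w x y * (f y - f x) = D * Δ x := by
    rw [hΔ, wlap_eq G f hx]
    field_simp
    rw [← hD, ← hN, mul_div_cancel_left₀ _ hx.ne']
  have e4 : wgam2 G w f x = (1/2) * (D⁻¹ * ∑ y ∈ N, (w x y * (Γ y - Γ x)
      - w x y * ((f y - f x) * (Δ y - Δ x)))) := by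
    rw [wgam2, ← hΓ, ← hΔ, e1, e2, Finset.sum_sub_distrib, mul_sub]
    ring
  rw [e4, e3, hB, hC, hE]
  have hD' : D ≠ 0 := hx.ne'
  field_simp
  ring

lemma tw_le (G : SimpleGraph V) [G.LocallyFinite] [DecidableEq V]
    {w : V → V → ℝ} {x y : V} (hy : G.Adj x y) :
    tw G w x ≤ 4 * w x y / wdeg G w y +
      ∑ z ∈ G.neighborFinset x ∩ G.neighborFinset y,
        min (w x y / wdeg G w y) (w x z / wdeg G w z) * (w z y / w x y) := by
  exact ciInf_le (Set.Finite.bddBelow (Set.finite_range _)) (⟨y, hy⟩ : G.neighborSet x)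

lemma swap_sum (G : SimpleGraph V) [G.LocallyFinite] [DecidableRel G.Adj] [DecidableEq V]
    (x : V) (F : V → V → ℝ) :
    ∑ y ∈ G.neighborFinset x, ∑ z ∈ G.neighborFinset x, (if G.Adj y z then F y z else 0)
    = ∑ y ∈ G.neighborFinset x, ∑ z ∈ G.neighborFinset x, (if G.Adj y z then F z y else 0) := by
  rw [Finset.sum_comm]
  refine Finset.sum_congr rfl fun y _ => Finset.sum_congr rfl fun z _ => ?_
  exact if_congr (G.adj_comm _ _) rfl rfl

lemma inter_eq_filter (G : SimpleGraph V) [G.LocallyFinite] [DecidableRel G.Adj] [DecidableEq V]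
    (x y : V) : G.neighborFinset x ∩ G.neighborFinset y
      = (G.neighborFinset x).filter (fun z => G.Adj y z) := by
  ext z
  simp [mem_neighborFinset]


lemma pointwise (G : SimpleGraph V) [G.LocallyFinite] {w : V → V → ℝ} (hw : IsWeight G w)
    (f : V → ℝ) {x y z : V} (hxy : G.Adj x y) (hxz : G.Adj x z) (hyz : G.Adj y z) :
    w x y * (wdeg G w y)⁻¹ * w y z * (f x - 2 * f y + f z) ^ 2
      + w x z * (wdeg G w z)⁻¹ * w z y * (f x - 2 * f z + f y) ^ 2
    ≥ min (w x y / wdeg G w y) (w x z / wdeg G w z) * w z y * (f y - f x) ^ 2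
      + min (w x z / wdeg G w z) (w x y / wdeg G w y) * w y z * (f z - f x) ^ 2 := by
  have hsymm := hw.1
  have hpos := hw.2.1
  have hDy : 0 < wdeg G w y := wdeg_pos G hw hxy.symm
  have hDz : 0 < wdeg G w z := wdeg_pos G hw hxz.symm
  have hc : 0 < w y z := hpos y z hyz
  rw [hsymm z y, min_comm (w x z / wdeg G w z) (w x y / wdeg G w y)]
  simp only [div_eq_mul_inv]
  set m := min (w x y * (wdeg G w y)⁻¹) (w x z * (wdeg G w z)⁻¹) with hm
  have hmp : m ≤ w x y * (wdeg G w y)⁻¹ := min_le_left _ _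
  have hmq : m ≤ w x z * (wdeg G w z)⁻¹ := min_le_right _ _
  have h1 : 0 ≤ (w x y * (wdeg G w y)⁻¹ - m) * (w y z * (f x - 2 * f y + f z) ^ 2) :=
    mul_nonneg (by linarith) (by positivity)
  have h2 : 0 ≤ (w x z * (wdeg G w z)⁻¹ - m) * (w y z * (f x - 2 * f z + f y) ^ 2) :=
    mul_nonneg (by linarith) (by positivity)
  have hm0 : 0 ≤ m := le_min (mul_nonneg (hpos x y hxy).le (inv_nonneg.mpr hDy.le))
    (mul_nonneg (hpos x z hxz).le (inv_nonneg.mpr hDz.le))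
  have h3 : 0 ≤ m * (w y z * (4 * (f y - f z) ^ 2)) := mul_nonneg hm0 (by positivity)
  nlinarith [h1, h2, h3]

/-- The main inequality: the fourth-order term dominates `t_w(x)` times the Γ-sum. -/
lemma main_ineq (G : SimpleGraph V) [G.LocallyFinite] [DecidableRel G.Adj] [DecidableEq V]
    {w : V → V → ℝ} (hw : IsWeight G w) (f : V → ℝ) {x : V}
    (hx : (G.neighborFinset x).Nonempty) :
    ∑ y ∈ G.neighborFinset x, w x y * ((wdeg G w y)⁻¹ *
        ∑ z ∈ G.neighborFinset y, w y z * (f x - 2 * f y + f z) ^ 2)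
    ≥ tw G w x * ∑ y ∈ G.neighborFinset x, w x y * (f y - f x) ^ 2 := by
  have hsymm := hw.1
  have hpos := hw.2.1
  set N := G.neighborFinset x with hN
  -- Step 1: restrict inner sums to {x} ∪ (N ∩ N y)
  have step1 : ∀ y ∈ N, w x y * ((wdeg G w y)⁻¹ *
        ∑ z ∈ G.neighborFinset y, w y z * (f x - 2 * f y + f z) ^ 2)
      ≥ w x y * (wdeg G w y)⁻¹ * (w y x * (f x - 2 * f y + f x) ^ 2
          + ∑ z ∈ N ∩ G.neighborFinset y, w y z * (f x - 2 * f y + f z) ^ 2) := by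
    intro y hy
    have hadj : G.Adj x y := (G.mem_neighborFinset x y).mp hy
    have hDy : 0 < wdeg G w y := wdeg_pos G hw hadj.symm
    have hxnotin : x ∉ N ∩ G.neighborFinset y := by
      simp [hN, mem_neighborFinset]
    have hsub : insert x (N ∩ G.neighborFinset y) ⊆ G.neighborFinset y := by
      refine Finset.insert_subset ?_ (Finset.inter_subset_right)
      exact (G.mem_neighborFinset y x).mpr hadj.symm
    have hbound : w y x * (f x - 2 * f y + f x) ^ 2
          + ∑ z ∈ N ∩ G.neighborFinset y, w y z * (f x - 2 * f y + f z) ^ 2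
        ≤ ∑ z ∈ G.neighborFinset y, w y z * (f x - 2 * f y + f z) ^ 2 := by
      refine le_trans ?_ (Finset.sum_le_sum_of_subset_of_nonneg hsub fun z hz _ => ?_)
      · rw [Finset.sum_insert hxnotin]
      · have hzadj : G.Adj y z := (G.mem_neighborFinset y z).mp hz
        have := hpos y z hzadj
        positivity
    have hwxy : 0 ≤ w x y := (hpos x y hadj).le
    have hDyinv : (0:ℝ) ≤ (wdeg G w y)⁻¹ := by positivity
    calc w x y * (wdeg G w y)⁻¹ * (w y x * (f x - 2 * f y + f x) ^ 2
          + ∑ z ∈ N ∩ G.neighborFinset y, w y z * (f x - 2 * f y + f z) ^ 2)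
        ≤ w x y * (wdeg G w y)⁻¹ *
            ∑ z ∈ G.neighborFinset y, w y z * (f x - 2 * f y + f z) ^ 2 := by
          exact mul_le_mul_of_nonneg_left hbound (by positivity)
      _ = w x y * ((wdeg G w y)⁻¹ *
            ∑ z ∈ G.neighborFinset y, w y z * (f x - 2 * f y + f z) ^ 2) := by ring
  have hA : ∑ y ∈ N, w x y * ((wdeg G w y)⁻¹ *
        ∑ z ∈ G.neighborFinset y, w y z * (f x - 2 * f y + f z) ^ 2)
      ≥ ∑ y ∈ N, w x y * (wdeg G w y)⁻¹ * (w y x * (f x - 2 * f y + f x) ^ 2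
          + ∑ z ∈ N ∩ G.neighborFinset y, w y z * (f x - 2 * f y + f z) ^ 2) :=
    Finset.sum_le_sum fun y hy => step1 y hy
  have hR : ∑ y ∈ N, w x y * (wdeg G w y)⁻¹ * (w y x * (f x - 2 * f y + f x) ^ 2
        + ∑ z ∈ N ∩ G.neighborFinset y, w y z * (f x - 2 * f y + f z) ^ 2)
      = (∑ y ∈ N, 4 * (w x y * (w x y / wdeg G w y)) * (f y - f x) ^ 2)
        + ∑ y ∈ N, ∑ z ∈ N ∩ G.neighborFinset y,
            w x y * (wdeg G w y)⁻¹ * w y z * (f x - 2 * f y + f z) ^ 2 := by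
    rw [← Finset.sum_add_distrib]
    refine Finset.sum_congr rfl fun y hy => ?_
    rw [hsymm y x, mul_add, Finset.mul_sum]
    congr 1
    · rw [div_eq_mul_inv]; ring
    · exact Finset.sum_congr rfl fun z hz => by ring
  have swap : ∀ F : V → V → ℝ,
      ∑ y ∈ N, ∑ z ∈ N, (if G.Adj y z then F y z else 0)
      = ∑ y ∈ N, ∑ z ∈ N, (if G.Adj y z then F z y else 0) := by
    intro F
    rw [Finset.sum_comm]
    refine Finset.sum_congr rfl fun y _ => Finset.sum_congr rfl fun z _ => ?_
    exact if_congr (G.adj_comm _ _) rfl rfl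
  have conv : ∀ F : V → V → ℝ, ∑ y ∈ N, ∑ z ∈ N ∩ G.neighborFinset y, F y z
      = ∑ y ∈ N, ∑ z ∈ N, if G.Adj y z then F y z else 0 := by
    intro F
    refine Finset.sum_congr rfl fun y _ => ?_
    have : N ∩ G.neighborFinset y = N.filter (fun z => G.Adj y z) := by
      ext z
      simp [hN, mem_neighborFinset, adj_comm, and_comm]
    rw [this, Finset.sum_filter]
  have twice : ∀ F : V → V → ℝ,
      (2:ℝ) * ∑ y ∈ N, ∑ z ∈ N, (if G.Adj y z then F y z else 0)
      = ∑ y ∈ N, ∑ z ∈ N, (if G.Adj y z then F y z + F z y else 0) := by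
    intro F
    rw [two_mul]
    nth_rewrite 2 [swap F]
    rw [← Finset.sum_add_distrib]
    refine Finset.sum_congr rfl fun y _ => ?_
    rw [← Finset.sum_add_distrib]
    refine Finset.sum_congr rfl fun z _ => ?_
    by_cases h : G.Adj y z <;> simp [h]
  have hS2 : ∑ y ∈ N, ∑ z ∈ N ∩ G.neighborFinset y,
        w x y * (wdeg G w y)⁻¹ * w y z * (f x - 2 * f y + f z) ^ 2
      ≥ ∑ y ∈ N, ∑ z ∈ N ∩ G.neighborFinset y,
          min (w x y / wdeg G w y) (w x z / wdeg G w z) * w z y * (f y - f x) ^ 2 := by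
    rw [conv, conv]
    have h2 : (2:ℝ) * ∑ y ∈ N, ∑ z ∈ N, (if G.Adj y z then
          min (w x y / wdeg G w y) (w x z / wdeg G w z) * w z y * (f y - f x) ^ 2 else 0)
        ≤ 2 * ∑ y ∈ N, ∑ z ∈ N, (if G.Adj y z then
          w x y * (wdeg G w y)⁻¹ * w y z * (f x - 2 * f y + f z) ^ 2 else 0) := by
      rw [twice, twice]
      refine Finset.sum_le_sum fun y hy => Finset.sum_le_sum fun z hz => ?_
      have hxy : G.Adj x y := (G.mem_neighborFinset x y).mp hy
      have hxz : G.Adj x z := (G.mem_neighborFinset x z).mp hz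
      by_cases h : G.Adj y z
      · simp only [if_pos h]
        exact pointwise G hw f hxy hxz h
      · simp [h]
    linarith
  have hfinal : (∑ y ∈ N, 4 * (w x y * (w x y / wdeg G w y)) * (f y - f x) ^ 2)
        + ∑ y ∈ N, ∑ z ∈ N ∩ G.neighborFinset y,
            min (w x y / wdeg G w y) (w x z / wdeg G w z) * w z y * (f y - f x) ^ 2
      ≥ tw G w x * ∑ y ∈ N, w x y * (f y - f x) ^ 2 := by
    rw [← Finset.sum_add_distrib, Finset.mul_sum]
    refine Finset.sum_le_sum fun y hy => ?_
    have hadj : G.Adj x y := (G.mem_neighborFinset x y).mp hy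
    have hDy : 0 < wdeg G w y := wdeg_pos G hw hadj.symm
    have hwy : 0 < w x y := hpos x y hadj
    have htw := tw_le G (w := w) hadj
    have hTform : 4 * (w x y * (w x y / wdeg G w y)) * (f y - f x) ^ 2
        + ∑ z ∈ N ∩ G.neighborFinset y,
            min (w x y / wdeg G w y) (w x z / wdeg G w z) * w z y * (f y - f x) ^ 2
        = (4 * w x y / wdeg G w y + ∑ z ∈ N ∩ G.neighborFinset y,
            min (w x y / wdeg G w y) (w x z / wdeg G w z) * (w z y / w x y))
          * (w x y * (f y - f x) ^ 2) := by
      rw [add_mul, Finset.sum_mul]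
      congr 1
      · field_simp
      · refine Finset.sum_congr rfl fun z hz => ?_
        field_simp
    rw [hTform]
    have hnn : (0:ℝ) ≤ w x y * (f y - f x) ^ 2 := by positivity
    exact mul_le_mul_of_nonneg_right htw hnn
  calc tw G w x * ∑ y ∈ N, w x y * (f y - f x) ^ 2
      ≤ (∑ y ∈ N, 4 * (w x y * (w x y / wdeg G w y)) * (f y - f x) ^ 2)
        + ∑ y ∈ N, ∑ z ∈ N ∩ G.neighborFinset y,
            min (w x y / wdeg G w y) (w x z / wdeg G w z) * w z y * (f y - f x) ^ 2 := hfinal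
    _ ≤ (∑ y ∈ N, 4 * (w x y * (w x y / wdeg G w y)) * (f y - f x) ^ 2)
        + ∑ y ∈ N, ∑ z ∈ N ∩ G.neighborFinset y,
            w x y * (wdeg G w y)⁻¹ * w y z * (f x - 2 * f y + f z) ^ 2 := by linarith [hS2]
    _ = ∑ y ∈ N, w x y * (wdeg G w y)⁻¹ * (w y x * (f x - 2 * f y + f x) ^ 2
          + ∑ z ∈ N ∩ G.neighborFinset y, w y z * (f x - 2 * f y + f z) ^ 2) := hR.symm
    _ ≤ ∑ y ∈ N, w x y * ((wdeg G w y)⁻¹ *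
          ∑ z ∈ G.neighborFinset y, w y z * (f x - 2 * f y + f z) ^ 2) := hA

/-- On a weighted connected locally finite graph, the Laplacian satisfies
`Γ₂(f,f)(x) ≥ (1/2)(Δf(x))² + ((1/2)t_w(x) - 1)·Γ(f,f)(x)`. -/
theorem weighted_CD_inequality_triangles (G : SimpleGraph V) [G.LocallyFinite]
    [DecidableRel G.Adj] [DecidableEq V]
    (w : V → V → ℝ) (hw : IsWeight G w) (hG : G.Connected)
    (f : V → ℝ) (x : V) :
    wgam2 G w f x ≥
      (1 / 2) * (wlap G w f x) ^ 2 + ((1 / 2) * tw G w x - 1) * wgam G w f f x := by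
  by_cases hne : (G.neighborFinset x).Nonempty
  · obtain ⟨y₀, hy₀⟩ := hne
    have hDx : 0 < wdeg G w x := wdeg_pos G hw ((G.mem_neighborFinset x y₀).mp hy₀)
    have hid := gam2_identity G hw f hDx
    have hsq := wgam_sq G f hDx
    have hmain := main_ineq G hw f ⟨y₀, hy₀⟩
    have hDinv : (0:ℝ) ≤ (wdeg G w x)⁻¹ := by positivity
    have hmul : (1 / 4) * (wdeg G w x)⁻¹ *
          (tw G w x * ∑ y ∈ G.neighborFinset x, w x y * (f y - f x) ^ 2)
        ≤ (1 / 4) * (wdeg G w x)⁻¹ *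
          ∑ y ∈ G.neighborFinset x, w x y * ((wdeg G w y)⁻¹ *
            ∑ z ∈ G.neighborFinset y, w y z * (f x - 2 * f y + f z) ^ 2) := by
      exact mul_le_mul_of_nonneg_left hmain (by positivity)
    rw [ge_iff_le, hid, hsq]
    rw [hsq] at hid
    nlinarith [hmul]
  · have hempty : G.neighborFinset x = ∅ := Finset.not_nonempty_iff_eq_empty.mp hne
    have hEmptySet : IsEmpty (G.neighborSet x) := by
      constructor
      rintro ⟨y, hy⟩
      have : y ∈ G.neighborFinset x := (G.mem_neighborFinset x y).mpr hy
      simp [hempty] at this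
    have htw : tw G w x = 0 := Real.iInf_of_isEmpty _
    simp only [wgam2, wgam, wlap, wdeg, hempty, Finset.sum_empty, mul_zero, zero_mul,
      zero_sub, Pi.mul_apply, htw]
    nlinarith [sq_nonneg (f x)]
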